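/- Let E be a group and N a normal subgroup of E with N contained in both the center Z(E) and the derived subgroup [E,E] of E. If the quotient group E/N is generated by a set S, then E is generated by a set of cardinality at most that of S. -/

import Mathlib

open scoped Pointwise commutatorElement

private theorem central_shift_left {E : Type*} [Group E] {z : E}
    (hz : z ∈ Subgroup.center E) (a b : E) : ⁅a * z, b⁆ = ⁅a, b⁆ := by
  have h1 : z * b * z⁻¹ = b := by
    rw [← Subgroup.mem_center_iff.mp hz b, mul_inv_cancel_right]
  have h2 : (a * z) * b * (a * z)⁻¹ * b⁻¹ = a * (z * b * z⁻¹) * a⁻¹ * b⁻¹ := by group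
  rw [commutatorElement_def, commutatorElement_def, h2, h1]

private theorem central_shift_right {E : Type*} [Group E] {z : E}
    (hz : z ∈ Subgroup.center E) (a b : E) : ⁅a, b * z⁆ = ⁅a, b⁆ := by
  have h1 : z * a⁻¹ * z⁻¹ = a⁻¹ := by
    rw [← Subgroup.mem_center_iff.mp hz a⁻¹, mul_inv_cancel_right]
  have h2 : a * (b * z) * a⁻¹ * (b * z)⁻¹ = a * b * (z * a⁻¹ * z⁻¹) * b⁻¹ := by group
  rw [commutatorElement_def, commutatorElement_def, h2, h1]

private theorem central_commutator_shift {E : Type*} [Group E] {n n' : E}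
    (hc : n ∈ Subgroup.center E) (hc' : n' ∈ Subgroup.center E) (h h' : E) :
    ⁅h * n, h' * n'⁆ = ⁅h, h'⁆ := by
  rw [central_shift_left hc, central_shift_right hc']


/-- If `N` is a normal subgroup of `E` contained in both the
center `Z(E)` and the derived subgroup `[E,E]`, and the quotient `E ⧸ N` is
generated by a set `S`, then `E` is generated by a set of cardinality at most
that of `S`. -/
theorem stem_extension_generated_by_same_cardinality
    {E : Type*} [Group E] (N : Subgroup E) [N.Normal]
    (hN : N ≤ Subgroup.center E ⊓ commutator E)
    (S : Set (E ⧸ N)) (hS : Subgroup.closure S = ⊤) :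
    ∃ T : Set E, Cardinal.mk T ≤ Cardinal.mk S ∧ Subgroup.closure T = ⊤ := by
  -- choose lifts
  have hlift : ∀ s : S, ∃ e : E, (e : E ⧸ N) = (s : E ⧸ N) := fun s =>
    Quotient.exists_rep (s : E ⧸ N)
  choose f hf using hlift
  set T : Set E := Set.range f with hT
  refine ⟨T, ?_, ?_⟩
  · exact (Cardinal.mk_range_le).trans_eq rfl
  set H := Subgroup.closure T with hH
  -- image of H in the quotient is everything
  have hmap : H.map (QuotientGroup.mk' N) = ⊤ := by
    rw [hH, MonoidHom.map_closure]
    rw [eq_top_iff, ← hS]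
    apply Subgroup.closure_mono
    rintro s hs
    exact ⟨f ⟨s, hs⟩, ⟨⟨s, hs⟩, rfl⟩, hf ⟨s, hs⟩⟩
  have hsup : H ⊔ N = ⊤ := by
    have := Subgroup.comap_map_eq (QuotientGroup.mk' N) H
    rw [hmap, QuotientGroup.ker_mk'] at this
    simpa using this.symm
  -- every element of E is h * n with n ∈ N
  have hdecomp : ∀ x : E, ∃ h ∈ H, ∃ n ∈ N, x = h * n := by
    intro x
    have hx : x ∈ (H : Set E) * (N : Set E) := by
      rw [← Subgroup.mul_normal H N, hsup]; trivial
    obtain ⟨h, hh, n, hn, rfl⟩ := hx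
    exact ⟨h, hh, n, hn, rfl⟩
  -- commutator E ≤ H since N is central
  have hcomm : commutator E ≤ H := by
    rw [commutator_def]
    rw [Subgroup.commutator_le]
    intro x _ y _
    obtain ⟨h, hh, n, hn, rfl⟩ := hdecomp x
    obtain ⟨h', hh', n', hn', rfl⟩ := hdecomp y
    have hc : n ∈ Subgroup.center E := (hN hn).1
    have hc' : n' ∈ Subgroup.center E := (hN hn').1
    rw [central_commutator_shift hc hc', commutatorElement_def]
    exact H.mul_mem (H.mul_mem (H.mul_mem hh hh') (H.inv_mem hh)) (H.inv_mem hh')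
  have hNH : N ≤ H := fun n hn => hcomm (hN hn).2
  rw [eq_top_iff, ← hsup]
  exact sup_le le_rfl hNH
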